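/- Let C be a Hermitian n×n complex matrix and P an orthogonal projection (P² = P = P†). Then ‖PC‖₁ = ‖P·|C|‖₁ ≤ √(tr(P·|C|)) · √(tr|C|), where |C| = √(C²) and ‖M‖₁ denotes the trace norm. -/

import Mathlib

open scoped ComplexOrder

/-- The trace norm of a complex matrix: `tr √(M† M)`. -/
noncomputable def traceNorm {n : ℕ} (M : Matrix (Fin n) (Fin n) ℂ) : ℝ :=
  (((Matrix.posSemidef_conjTranspose_mul_self M).1.eigenvectorUnitary.1 *
    Matrix.diagonal (fun i => ((Real.sqrt ((Matrix.posSemidef_conjTranspose_mul_self M).1.eigenvalues i) : ℝ) : ℂ)) *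
    (star (Matrix.posSemidef_conjTranspose_mul_self M).1.eigenvectorUnitary : Matrix (Fin n) (Fin n) ℂ)).trace).re

/-- The absolute value `|C| = √(C† C)` of a matrix. -/
noncomputable def matrixAbs {n : ℕ} (C : Matrix (Fin n) (Fin n) ℂ) :
    Matrix (Fin n) (Fin n) ℂ :=
  ((Matrix.posSemidef_conjTranspose_mul_self C).1.eigenvectorUnitary.1 *
    Matrix.diagonal (fun i => ((Real.sqrt ((Matrix.posSemidef_conjTranspose_mul_self C).1.eigenvalues i) : ℝ) : ℂ)) *
    (star (Matrix.posSemidef_conjTranspose_mul_self C).1.eigenvectorUnitary : Matrix (Fin n) (Fin n) ℂ))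

open Matrix Polynomial

noncomputable def Matrix.PosSemidef.sqrt {n : ℕ} {A : Matrix (Fin n) (Fin n) ℂ} (hA : A.PosSemidef) :
    Matrix (Fin n) (Fin n) ℂ :=
  hA.1.eigenvectorUnitary.1 * Matrix.diagonal (fun i => ((Real.sqrt (hA.1.eigenvalues i) : ℝ) : ℂ)) *
    (star hA.1.eigenvectorUnitary : Matrix (Fin n) (Fin n) ℂ)

lemma traceNorm_eq {n : ℕ} (M : Matrix (Fin n) (Fin n) ℂ) :
    traceNorm M = ((Matrix.posSemidef_conjTranspose_mul_self M).sqrt.trace).re := rfl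

lemma Matrix.PosSemidef.posSemidef_sqrt {n : ℕ} {A : Matrix (Fin n) (Fin n) ℂ}
    (hA : A.PosSemidef) : hA.sqrt.PosSemidef := by
  unfold Matrix.PosSemidef.sqrt
  have hD : (Matrix.diagonal (fun i => ((Real.sqrt (hA.1.eigenvalues i) : ℝ) : ℂ))).PosSemidef := by
    refine Matrix.PosSemidef.diagonal ?_
    intro i
    simp [Complex.zero_le_real, Real.sqrt_nonneg]
  have := hD.mul_mul_conjTranspose_same (hA.1.eigenvectorUnitary : Matrix (Fin n) (Fin n) ℂ)
  rwa [← Matrix.star_eq_conjTranspose, ← Unitary.coe_star] at this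

lemma Matrix.PosSemidef.sqrt_mul_self {n : ℕ} {A : Matrix (Fin n) (Fin n) ℂ}
    (hA : A.PosSemidef) : hA.sqrt * hA.sqrt = A := by
  unfold Matrix.PosSemidef.sqrt
  have hsUU : (star hA.1.eigenvectorUnitary : Matrix (Fin n) (Fin n) ℂ) * hA.1.eigenvectorUnitary.1
      = 1 := by
    exact_mod_cast Unitary.coe_star_mul_self hA.1.eigenvectorUnitary
  conv_rhs => rw [hA.1.spectral_theorem, Unitary.conjStarAlgAut_apply]
  simp only [mul_assoc]
  rw [← mul_assoc (star hA.1.eigenvectorUnitary : Matrix (Fin n) (Fin n) ℂ), hsUU, Matrix.one_mul,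
    ← mul_assoc (Matrix.diagonal _), Matrix.diagonal_mul_diagonal]
  congr 3
  funext i
  simp only [Function.comp_apply]
  rw [← Complex.ofReal_mul, Real.mul_self_sqrt (hA.eigenvalues_nonneg i)]
  rfl

lemma det_charlike_mul_comm {n : ℕ} (A B : Matrix (Fin n) (Fin n) ℂ) (z : ℂ) :
    det (z • (1 : Matrix (Fin n) (Fin n) ℂ) - A * B) = det (z • 1 - B * A) := by
  rcases eq_or_ne z 0 with rfl | hz
  · simp only [zero_smul, zero_sub, det_neg]
    rw [det_mul_comm]
  · have h1 : z • (1 : Matrix (Fin n) (Fin n) ℂ) - A * B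
        = z • ((1 : Matrix (Fin n) (Fin n) ℂ) + ((-z⁻¹) • A) * B) := by
      rw [smul_add, smul_mul_assoc, smul_smul]
      field_simp
      simp [sub_eq_add_neg]
    have h2 : z • (1 : Matrix (Fin n) (Fin n) ℂ) - B * A
        = z • ((1 : Matrix (Fin n) (Fin n) ℂ) + B * ((-z⁻¹) • A)) := by
      rw [smul_add, mul_smul_comm, smul_smul]
      field_simp
      simp [sub_eq_add_neg]
    rw [h1, h2, det_smul, det_smul, det_one_add_mul_comm]

lemma det_charlike_hermitian {n : ℕ} {H : Matrix (Fin n) (Fin n) ℂ} (hH : H.IsHermitian) (z : ℂ) :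
    det (z • (1 : Matrix (Fin n) (Fin n) ℂ) - H) = ∏ i, (z - (hH.eigenvalues i : ℂ)) := by
  set U : Matrix (Fin n) (Fin n) ℂ := (hH.eigenvectorUnitary : Matrix (Fin n) (Fin n) ℂ) with hU
  have hUU : U * star U = 1 := by
    exact_mod_cast Unitary.coe_mul_star_self hH.eigenvectorUnitary
  have hsUU : star U * U = 1 := by
    exact_mod_cast Unitary.coe_star_mul_self hH.eigenvectorUnitary
  have key : z • (1 : Matrix (Fin n) (Fin n) ℂ) - H
      = U * (diagonal (fun i => z - (hH.eigenvalues i : ℂ))) * star U := by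
    have hd : (diagonal (fun i => z - (hH.eigenvalues i : ℂ)))
        = z • (1 : Matrix (Fin n) (Fin n) ℂ) - diagonal (RCLike.ofReal ∘ hH.eigenvalues) := by
      rw [← diagonal_one, ← diagonal_smul, diagonal_sub]
      funext i; simp [Pi.smul_apply]
    rw [hd, Matrix.mul_sub, Matrix.sub_mul, mul_smul_comm, smul_mul_assoc, Matrix.mul_one, hUU]
    conv_lhs => rw [hH.spectral_theorem, Unitary.conjStarAlgAut_apply]
  rw [key, det_mul, det_mul, mul_comm, ← mul_assoc, ← det_mul, hsUU, det_one, one_mul, det_diagonal]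

lemma multiset_eq_of_prod_eq {n : ℕ} (f g : Fin n → ℝ)
    (h : ∀ z : ℂ, ∏ i, (z - (f i : ℂ)) = ∏ i, (z - (g i : ℂ))) :
    Multiset.map f Finset.univ.val = Multiset.map g Finset.univ.val := by
  have hp : ∀ (f : Fin n → ℝ),
      (∏ i, (X - C ((f i : ℂ)))) = ((Finset.univ.val.map (fun i => ((f i : ℝ) : ℂ))).map
        (fun a => X - C a)).prod := by
    intro f
    rw [Multiset.map_map]
    rfl
  have hpq : (∏ i, (X - C ((f i : ℂ)))) = (∏ i, (X - C ((g i : ℂ)))) := by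
    apply Polynomial.funext
    intro z
    simpa [eval_prod] using h z
  have := congrArg Polynomial.roots hpq
  rw [hp f, hp g, Polynomial.roots_multiset_prod_X_sub_C,
    Polynomial.roots_multiset_prod_X_sub_C] at this
  have h2 : Multiset.map (Complex.ofReal ∘ f) Finset.univ.val
      = Multiset.map (Complex.ofReal ∘ g) Finset.univ.val := by
    simpa [← Multiset.map_map] using this
  rw [← Multiset.map_map, ← Multiset.map_map] at h2
  exact Multiset.map_injective Complex.ofReal_injective h2

lemma sum_f_eq_of_multiset_eq {n : ℕ} (f g : Fin n → ℝ) (F : ℝ → ℝ)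
    (h : Multiset.map f Finset.univ.val = Multiset.map g Finset.univ.val) :
    ∑ i, F (f i) = ∑ i, F (g i) := by
  have : (Multiset.map f Finset.univ.val).map F = (Multiset.map g Finset.univ.val).map F := by
    rw [h]
  rw [Multiset.map_map, Multiset.map_map] at this
  calc ∑ i, F (f i) = (Finset.univ.val.map (F ∘ f)).sum := rfl
    _ = (Finset.univ.val.map (F ∘ g)).sum := by rw [this]
    _ = ∑ i, F (g i) := rfl

lemma ip_mulVec {n : ℕ} (Q : Matrix (Fin n) (Fin n) ℂ) (x y : Fin n → ℂ) :
    star (Q *ᵥ x) ⬝ᵥ y = star x ⬝ᵥ (Qᴴ *ᵥ y) := by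
  rw [star_mulVec, ← dotProduct_mulVec]

lemma ip_self_re_nonneg {n : ℕ} (x : Fin n → ℂ) : 0 ≤ (star x ⬝ᵥ x).re := by
  have h := dotProduct_star_self_nonneg x
  exact (Complex.le_def.mp h).1

lemma ip_re_le {n : ℕ} (x y : Fin n → ℂ) :
    (star x ⬝ᵥ y).re ≤ Real.sqrt (star x ⬝ᵥ x).re * Real.sqrt (star y ⬝ᵥ y).re := by
  set ex : EuclideanSpace ℂ (Fin n) := (WithLp.equiv 2 (Fin n → ℂ)).symm x
  set ey : EuclideanSpace ℂ (Fin n) := (WithLp.equiv 2 (Fin n → ℂ)).symm y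
  have h1 : @inner ℂ _ _ ex ey = star x ⬝ᵥ y := by rw [dotProduct_comm]; rfl
  have hx : (star x ⬝ᵥ x).re = ‖ex‖ ^ 2 := by
    rw [show star x ⬝ᵥ x = @inner ℂ _ _ ex ex by rw [dotProduct_comm]; rfl, inner_self_eq_norm_sq_to_K]
    norm_cast
  have hy : (star y ⬝ᵥ y).re = ‖ey‖ ^ 2 := by
    rw [show star y ⬝ᵥ y = @inner ℂ _ _ ey ey by rw [dotProduct_comm]; rfl, inner_self_eq_norm_sq_to_K]
    norm_cast
  rw [hx, hy, Real.sqrt_sq (norm_nonneg _), Real.sqrt_sq (norm_nonneg _), ← h1]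
  have h2 := norm_inner_le_norm (𝕜 := ℂ) ex ey
  exact (Complex.re_le_norm _).trans h2

lemma psd_trace_re_nonneg {n : ℕ} {Z : Matrix (Fin n) (Fin n) ℂ} (hZ : Z.PosSemidef) :
    0 ≤ (Z.trace).re := by
  rw [Matrix.trace]
  rw [Complex.re_sum]
  apply Finset.sum_nonneg
  intro k _
  have h := hZ.dotProduct_mulVec_nonneg (Pi.single k 1)
  have hk : star (Pi.single k 1 : Fin n → ℂ) ⬝ᵥ (Z *ᵥ Pi.single k 1) = Z k k := by
    simp [dotProduct, Pi.single_apply, mulVec, star_apply]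
  rw [hk] at h
  exact (Complex.le_def.mp h).1

lemma trace_mul_psd_nonneg {n : ℕ} {X Y : Matrix (Fin n) (Fin n) ℂ}
    (hX : X.PosSemidef) (hY : Y.PosSemidef) : 0 ≤ ((X * Y).trace).re := by
  have h1 : X * Y = hX.sqrt * (hX.sqrt * Y) := by rw [← mul_assoc, hX.sqrt_mul_self]
  rw [h1, Matrix.trace_mul_comm]
  have h2 : (hX.sqrt * Y * hX.sqrt).PosSemidef := by
    have := hY.mul_mul_conjTranspose_same hX.sqrt
    rwa [hX.posSemidef_sqrt.1.eq] at this
  exact psd_trace_re_nonneg h2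

lemma sum_ip_trace {n : ℕ} (W Q : Matrix (Fin n) (Fin n) ℂ) :
    ∑ i, star (fun j => W j i) ⬝ᵥ (Q *ᵥ (fun j => W j i)) = (Wᴴ * Q * W).trace := by
  simp only [Matrix.trace, Matrix.diag, Matrix.mul_apply, Matrix.mulVec, dotProduct,
    conjTranspose_apply, Finset.sum_mul, Finset.mul_sum, Pi.star_apply, star_apply]
  congr 1; funext i
  rw [Finset.sum_comm]
  congr 1; funext j
  congr 1; funext k
  ring

lemma trace_sqrt_re {n : ℕ} {A : Matrix (Fin n) (Fin n) ℂ} (hA : A.PosSemidef) :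
    (hA.sqrt.trace).re = ∑ i, Real.sqrt (hA.1.eigenvalues i) := by
  rw [Matrix.PosSemidef.sqrt, Matrix.trace_mul_cycle]
  rw [show ((star hA.1.eigenvectorUnitary : Matrix (Fin n) (Fin n) ℂ) * hA.1.eigenvectorUnitary.1) = 1 from ?_]
  · simp [Matrix.trace_diagonal, Complex.re_sum]
  · exact_mod_cast Unitary.coe_star_mul_self hA.1.eigenvectorUnitary

lemma holder {n : ℕ} (A B : Matrix (Fin n) (Fin n) ℂ) :
    traceNorm (A * B) ≤ Real.sqrt ((Aᴴ * A).trace.re) * Real.sqrt ((Bᴴ * B).trace.re) := by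
  set M := A * B with hM
  have hH : (Mᴴ * M).PosSemidef := Matrix.posSemidef_conjTranspose_mul_self M
  rw [traceNorm_eq, trace_sqrt_re]
  set lam : Fin n → ℝ := hH.1.eigenvalues with hlam
  have hlam0 : ∀ i, 0 ≤ lam i := fun i => hH.eigenvalues_nonneg i
  set v : Fin n → (Fin n → ℂ) := fun i => ⇑(hH.1.eigenvectorBasis i) with hv
  -- eigen equation
  have heig : ∀ i, (Mᴴ * M) *ᵥ v i = (lam i : ℂ) • v i := by
    intro i
    have := hH.1.mulVec_eigenvectorBasis i
    rw [this]
    ext j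
    simp [v, hlam, Complex.real_smul]
  -- orthonormality of v
  have hortho : ∀ i j, star (v i) ⬝ᵥ v j = if i = j then 1 else 0 := by
    intro i j
    have h := orthonormal_iff_ite.mp hH.1.eigenvectorBasis.orthonormal i j
    rw [EuclideanSpace.inner_eq_star_dotProduct, dotProduct_comm] at h
    exact h
  -- inner products of images
  have hMvv : ∀ i j, star (M *ᵥ v i) ⬝ᵥ (M *ᵥ v j) = (lam j : ℂ) * (if i = j then 1 else 0) := by
    intro i j
    rw [ip_mulVec, Matrix.mulVec_mulVec, heig j, dotProduct_smul, hortho, smul_eq_mul]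
  have hMv0 : ∀ i, lam i = 0 → M *ᵥ v i = 0 := by
    intro i h0
    apply dotProduct_star_self_eq_zero.mp
    rw [hMvv i i, h0]
    simp
  -- the partial isometry vectors
  set u : Fin n → (Fin n → ℂ) := fun i => (((Real.sqrt (lam i))⁻¹ : ℝ) : ℂ) • (M *ᵥ v i) with hu
  have hu0 : ∀ i, lam i = 0 → u i = 0 := by
    intro i h0
    rw [hu]
    simp [hMv0 i h0]
  have hipu : ∀ i j, star (u i) ⬝ᵥ u j
      = if i = j ∧ lam i ≠ 0 then 1 else 0 := by
    intro i j
    rcases eq_or_ne (lam i) 0 with h0 | h0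
    · simp [hu0 i h0, h0]
    rcases eq_or_ne (lam j) 0 with h0j | h0j
    · rw [hu0 j h0j, dotProduct_zero, if_neg]
      rintro ⟨rfl, -⟩
      exact h0 h0j
    rw [hu]
    simp only [star_smul, smul_dotProduct, dotProduct_smul, hMvv]
    rcases eq_or_ne i j with rfl | hij
    · have hs : Real.sqrt (lam i) * Real.sqrt (lam i) = lam i := Real.mul_self_sqrt (hlam0 i)
      have hsne : Real.sqrt (lam i) ≠ 0 := by
        intro h
        rw [← hs, h, mul_zero] at h0
        exact h0 rfl
      simp only [if_pos rfl, mul_one, smul_eq_mul, RCLike.star_def, Complex.conj_ofReal,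
        eq_self_iff_true, true_and, h0, ne_eq, not_false_iff, if_true]
      norm_cast
      field_simp
      rw [Real.sq_sqrt (hlam0 i)]
    · simp [hij]
  -- matrix whose rows are star (u i)
  set T : Matrix (Fin n) (Fin n) ℂ := Matrix.of (fun i j => star (u i j)) with hT
  have hTTH : T * Tᴴ = Matrix.diagonal (fun i => if lam i = 0 then (0 : ℂ) else 1) := by
    ext i k
    have hentry : (T * Tᴴ) i k = star (u i) ⬝ᵥ u k := by
      simp only [Matrix.mul_apply, Matrix.conjTranspose_apply, Matrix.of_apply, hT, star_star]
      rfl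
    rw [hentry, hipu]
    rcases eq_or_ne i k with rfl | hik
    · rcases eq_or_ne (lam i) 0 with h0 | h0 <;> simp [h0]
    · simp [hik]
  have hDT : (T * Tᴴ) * T = T := by
    rw [hTTH]
    ext i j
    rw [Matrix.diagonal_mul]
    rcases eq_or_ne (lam i) 0 with h0 | h0
    · simp [h0, hT, hu0 i h0]
    · simp [h0]
  set Pi' : Matrix (Fin n) (Fin n) ℂ := Tᴴ * T with hPi
  have hPiH : Pi'ᴴ = Pi' := by
    rw [hPi, Matrix.conjTranspose_mul, Matrix.conjTranspose_conjTranspose]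
  have hPi2 : Pi' * Pi' = Pi' := by
    rw [hPi, mul_assoc, ← mul_assoc T Tᴴ T, hDT]
  have hGpsd : ((1 : Matrix (Fin n) (Fin n) ℂ) - Pi').PosSemidef := by
    have hGH : ((1 : Matrix (Fin n) (Fin n) ℂ) - Pi')ᴴ = 1 - Pi' := by
      rw [Matrix.conjTranspose_sub, Matrix.conjTranspose_one, hPiH]
    have hGG : ((1 : Matrix (Fin n) (Fin n) ℂ) - Pi') * (1 - Pi') = 1 - Pi' := by
      rw [Matrix.sub_mul, Matrix.one_mul, Matrix.mul_sub, Matrix.mul_one, hPi2, sub_self,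
        sub_zero]
    have := Matrix.posSemidef_conjTranspose_mul_self ((1 : Matrix (Fin n) (Fin n) ℂ) - Pi')
    rwa [hGH, hGG] at this
  -- bound for the A-part
  have hb : ∑ i, (star (Aᴴ *ᵥ u i) ⬝ᵥ (Aᴴ *ᵥ u i)).re ≤ ((Aᴴ * A).trace).re := by
    have h1 : ∀ i, star (Aᴴ *ᵥ u i) ⬝ᵥ (Aᴴ *ᵥ u i) = star (u i) ⬝ᵥ ((A * Aᴴ) *ᵥ u i) := by
      intro i
      rw [ip_mulVec, Matrix.conjTranspose_conjTranspose, Matrix.mulVec_mulVec]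
    have hcol : ∀ i, (fun j => Tᴴ j i) = u i := by
      intro i
      funext j
      simp [hT]
    have h2 := sum_ip_trace Tᴴ (A * Aᴴ)
    rw [Matrix.conjTranspose_conjTranspose] at h2
    simp only [hcol] at h2
    have h3 : (T * (A * Aᴴ) * Tᴴ).trace = ((A * Aᴴ) * Pi').trace := by
      rw [Matrix.trace_mul_comm, ← mul_assoc, hPi, Matrix.trace_mul_comm]
    have h5 : 0 ≤ (((A * Aᴴ) * (1 - Pi')).trace).re :=
      trace_mul_psd_nonneg (Matrix.posSemidef_self_mul_conjTranspose A) hGpsd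
    have h6 : (A * Aᴴ) * (1 - Pi') = A * Aᴴ - (A * Aᴴ) * Pi' := by
      rw [Matrix.mul_sub, Matrix.mul_one]
    rw [h6, Matrix.trace_sub, Complex.sub_re] at h5
    calc ∑ i, (star (Aᴴ *ᵥ u i) ⬝ᵥ (Aᴴ *ᵥ u i)).re
        = (((A * Aᴴ) * Pi').trace).re := by
          rw [← Complex.re_sum]
          congr 1
          rw [← h3, ← h2]
          exact Finset.sum_congr rfl fun i _ => h1 i
      _ ≤ ((A * Aᴴ).trace).re := by linarith
      _ = ((Aᴴ * A).trace).re := by rw [Matrix.trace_mul_comm]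
  -- equality for the B-part
  have ha : ∑ i, (star (B *ᵥ v i) ⬝ᵥ (B *ᵥ v i)).re = ((Bᴴ * B).trace).re := by
    have h1 : ∀ i, star (B *ᵥ v i) ⬝ᵥ (B *ᵥ v i) = star (v i) ⬝ᵥ ((Bᴴ * B) *ᵥ v i) := by
      intro i
      rw [ip_mulVec, Matrix.mulVec_mulVec]
    set V : Matrix (Fin n) (Fin n) ℂ := (hH.1.eigenvectorUnitary : Matrix (Fin n) (Fin n) ℂ) with hV
    have hcol : ∀ i, (fun j => V j i) = v i := by
      intro i
      funext j
      simp [hV, v]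
    have h2 := sum_ip_trace V (Bᴴ * B)
    simp only [hcol] at h2
    have hVV : V * Vᴴ = 1 := by
      exact_mod_cast Unitary.coe_mul_star_self hH.1.eigenvectorUnitary
    have h3 : (Vᴴ * (Bᴴ * B) * V).trace = ((Bᴴ * B).trace) := by
      rw [Matrix.trace_mul_cycle, ← mul_assoc, hVV, Matrix.one_mul]
    rw [← Complex.re_sum]
    congr 1
    rw [← h3, ← h2]
    exact Finset.sum_congr rfl fun i _ => h1 i
  -- first step of the chain
  have step1 : ∀ i, Real.sqrt (lam i) = (star (u i) ⬝ᵥ (M *ᵥ v i)).re := by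
    intro i
    rcases eq_or_ne (lam i) 0 with h0 | h0
    · rw [h0, Real.sqrt_zero, hu0 i h0]
      simp
    · have hs : Real.sqrt (lam i) * Real.sqrt (lam i) = lam i := Real.mul_self_sqrt (hlam0 i)
      have hsne : Real.sqrt (lam i) ≠ 0 := by
        intro h
        rw [← hs, h, mul_zero] at h0
        exact h0 rfl
      rw [hu]
      simp only [star_smul, smul_dotProduct, hMvv i i, eq_self_iff_true, if_true,
        mul_one, smul_eq_mul, RCLike.star_def, Complex.conj_ofReal]
      rw [show ((((Real.sqrt (lam i))⁻¹ : ℝ) : ℂ)) * ((lam i : ℝ) : ℂ)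
          = ((Real.sqrt (lam i) : ℝ) : ℂ) from ?_]
      · simp
      · norm_cast
        field_simp
        rw [Real.sq_sqrt (hlam0 i)]
  calc ∑ i, Real.sqrt (lam i)
      = ∑ i, (star (Aᴴ *ᵥ u i) ⬝ᵥ (B *ᵥ v i)).re := by
        refine Finset.sum_congr rfl fun i _ => ?_
        rw [step1 i]
        congr 1
        rw [ip_mulVec Aᴴ (u i) (B *ᵥ v i), Matrix.conjTranspose_conjTranspose,
          Matrix.mulVec_mulVec]
    _ ≤ ∑ i, Real.sqrt ((star (Aᴴ *ᵥ u i) ⬝ᵥ (Aᴴ *ᵥ u i)).re)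
          * Real.sqrt ((star (B *ᵥ v i) ⬝ᵥ (B *ᵥ v i)).re) :=
        Finset.sum_le_sum fun i _ => ip_re_le _ _
    _ ≤ Real.sqrt (∑ i, (star (Aᴴ *ᵥ u i) ⬝ᵥ (Aᴴ *ᵥ u i)).re)
          * Real.sqrt (∑ i, (star (B *ᵥ v i) ⬝ᵥ (B *ᵥ v i)).re) :=
        Real.sum_sqrt_mul_sqrt_le _ (fun i => ip_self_re_nonneg _) (fun i => ip_self_re_nonneg _)
    _ ≤ Real.sqrt ((Aᴴ * A).trace).re * Real.sqrt ((Bᴴ * B).trace).re := by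
        rw [← ha]
        exact mul_le_mul_of_nonneg_right (Real.sqrt_le_sqrt hb) (Real.sqrt_nonneg _)

lemma traceNorm_eq_of_det {n : ℕ} (M N : Matrix (Fin n) (Fin n) ℂ)
    (h : ∀ z : ℂ, det (z • (1 : Matrix (Fin n) (Fin n) ℂ) - Mᴴ * M) = det (z • 1 - Nᴴ * N)) :
    traceNorm M = traceNorm N := by
  rw [traceNorm_eq, traceNorm_eq,
    trace_sqrt_re (Matrix.posSemidef_conjTranspose_mul_self M),
    trace_sqrt_re (Matrix.posSemidef_conjTranspose_mul_self N)]
  apply sum_f_eq_of_multiset_eq _ _ Real.sqrt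
  apply multiset_eq_of_prod_eq
  intro z
  rw [← det_charlike_hermitian (Matrix.posSemidef_conjTranspose_mul_self M).1 z,
    ← det_charlike_hermitian (Matrix.posSemidef_conjTranspose_mul_self N).1 z, h z]

/-- For Hermitian `C` and an orthogonal projection `P`,
`‖PC‖₁ = ‖P|C|‖₁ ≤ √(tr(P|C|)) √(tr|C|)`. -/
theorem traceNorm_proj_mul_hermitian
    {n : ℕ} (C P : Matrix (Fin n) (Fin n) ℂ)
    (hC : C.IsHermitian) (hP2 : P * P = P) (hP : P.IsHermitian) :
    traceNorm (P * C) = traceNorm (P * matrixAbs C) ∧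
    traceNorm (P * C) ≤
      Real.sqrt ((P * matrixAbs C).trace).re * Real.sqrt ((matrixAbs C).trace).re := by
  have hAbsPsd : (matrixAbs C).PosSemidef :=
    (Matrix.posSemidef_conjTranspose_mul_self C).posSemidef_sqrt
  have hAbsH : (matrixAbs C)ᴴ = matrixAbs C := hAbsPsd.1
  have hAbsSq : matrixAbs C * matrixAbs C = Cᴴ * C :=
    (Matrix.posSemidef_conjTranspose_mul_self C).sqrt_mul_self
  have heq : traceNorm (P * C) = traceNorm (P * matrixAbs C) := by
    apply traceNorm_eq_of_det
    intro z
    have h1 := det_charlike_mul_comm (P * C)ᴴ (P * C) z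
    have h2 := det_charlike_mul_comm (P * matrixAbs C)ᴴ (P * matrixAbs C) z
    have hkey : (P * C) * (P * C)ᴴ = (P * matrixAbs C) * (P * matrixAbs C)ᴴ := by
      rw [Matrix.conjTranspose_mul, Matrix.conjTranspose_mul, hAbsH, hC.eq]
      calc P * C * (C * Pᴴ) = P * (C * C) * Pᴴ := by
            rw [mul_assoc, mul_assoc, mul_assoc]
        _ = P * (matrixAbs C * matrixAbs C) * Pᴴ := by rw [hAbsSq, hC.eq]
        _ = P * matrixAbs C * (matrixAbs C * Pᴴ) := by
            rw [mul_assoc, mul_assoc, mul_assoc]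
    rw [h1, h2, hkey]
  refine ⟨heq, ?_⟩
  rw [heq]
  set R : Matrix (Fin n) (Fin n) ℂ := hAbsPsd.sqrt with hR
  have hRH : Rᴴ = R := hAbsPsd.posSemidef_sqrt.1
  have hRR : R * R = matrixAbs C := hAbsPsd.sqrt_mul_self
  have hPabs : P * matrixAbs C = (P * R) * R := by rw [mul_assoc, hRR]
  have h := holder (P * R) R
  rw [← hPabs] at h
  have htr1 : ((P * R)ᴴ * (P * R)).trace = ((P * matrixAbs C).trace) := by
    rw [Matrix.conjTranspose_mul, hRH, hP.eq]
    calc (R * P * (P * R)).trace = (R * (P * P) * R).trace := by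
          rw [mul_assoc, mul_assoc, mul_assoc]
      _ = (R * P * R).trace := by rw [hP2]
      _ = (P * R * R).trace := by rw [mul_assoc, Matrix.trace_mul_comm]
      _ = (P * matrixAbs C).trace := by rw [mul_assoc, hRR]
  have htr2 : (Rᴴ * R).trace = (matrixAbs C).trace := by rw [hRH, hRR]
  rwa [htr1, htr2] at h
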